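/- Let S be a semigroup that is the disjoint union of free monogenic subsemigroups ⟨a⟩, ⟨b⟩, ⟨c⟩, and suppose ab = ba = a^i, ac = ca = a^j, bc = a^k, cb = a^l for positive integers i, j, k, l. Then k = l and i + j = k + 2. -/

import Mathlib

/-- `pw a n` is `a ^ n` for `n ≥ 1` (with junk value `a` at `n = 0`),
defined in any magma. -/
def pw {S : Type*} [Mul S] (a : S) : ℕ → S
  | 0 => a
  | 1 => a
  | n + 2 => pw a (n + 1) * a

/-- The monogenic subsemigroup `⟨a⟩ = {a^n : n ≥ 1}`. -/
def genSet {S : Type*} [Mul S] (a : S) : Set S := {x | ∃ n, 1 ≤ n ∧ pw a n = x}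

/-- `a` has infinite order: its positive powers are pairwise distinct,
i.e. `⟨a⟩` is free monogenic. -/
def InfOrder {S : Type*} [Mul S] (a : S) : Prop :=
  ∀ m n : ℕ, 1 ≤ m → 1 ≤ n → pw a m = pw a n → m = n

lemma pw_congr {S : Type*} [Mul S] (a : S) {m n : ℕ} (h : m = n) :
    pw a m = pw a n := by rw [h]

lemma pw_succ {S : Type*} [Mul S] (a : S) (m : ℕ) :
    pw a (m + 2) = pw a (m + 1) * a := rfl

lemma pw_succ' {S : Type*} [Semigroup S] (a : S) (m : ℕ) :
    pw a (m + 1 + 1) = a * pw a (m + 1) := by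
  induction m with
  | zero => rfl
  | succ n ih =>
    calc pw a (n + 1 + 1 + 1) = pw a (n + 2) * a := rfl
      _ = (a * pw a (n + 1)) * a := by rw [← ih]
      _ = a * (pw a (n + 1) * a) := mul_assoc _ _ _
      _ = a * pw a (n + 1 + 1) := rfl

lemma pw_add {S : Type*} [Semigroup S] (a : S) (m n : ℕ) :
    pw a (m + 1 + (n + 1)) = pw a (m + 1) * pw a (n + 1) := by
  induction n with
  | zero => rfl
  | succ p ih =>
    have h : pw a (m + 1 + (p + 1 + 1)) = pw a (m + 1 + (p + 1)) * a := by
      rw [show m + 1 + (p + 1 + 1) = (m + p + 1) + 2 by omega, pw_succ]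
      exact congrArg (· * a) (pw_congr a (by omega))
    calc pw a (m + 1 + (p + 1 + 1)) = pw a (m + 1 + (p + 1)) * a := h
      _ = (pw a (m + 1) * pw a (p + 1)) * a := by rw [ih]
      _ = pw a (m + 1) * (pw a (p + 1) * a) := mul_assoc _ _ _
      _ = pw a (m + 1) * pw a (p + 1 + 1) := by rw [← pw_succ]

lemma pw_add' {S : Type*} [Semigroup S] (a : S) (m n : ℕ) (hm : 1 ≤ m)
    (hn : 1 ≤ n) : pw a (m + n) = pw a m * pw a n := by
  rw [pw_congr a (show m + n = (m - 1) + 1 + ((n - 1) + 1) by omega), pw_add,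
    pw_congr a (show m - 1 + 1 = m by omega),
    pw_congr a (show n - 1 + 1 = n by omega)]

lemma b_mul_pw {S : Type*} [Semigroup S] (a b : S) (i : ℕ) (hi : 1 ≤ i)
    (h2 : b * a = pw a i) (n : ℕ) :
    b * pw a (n + 1) = pw a (i + n) := by
  induction n with
  | zero => simpa [show pw a 1 = a from rfl] using h2
  | succ p ih =>
    rw [pw_succ', ← mul_assoc, h2, ← pw_add' a i (p + 1) hi (by omega)]

lemma pw_mul_b {S : Type*} [Semigroup S] (a b : S) (i : ℕ) (hi : 1 ≤ i)
    (h1 : a * b = pw a i) (n : ℕ) :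
    pw a (n + 1) * b = pw a (n + i) := by
  induction n with
  | zero => simpa [show pw a 1 = a from rfl] using h1
  | succ p ih =>
    rw [pw_succ, mul_assoc, h1, ← pw_add' a (p + 1) i (by omega) hi]

theorem stmt_12 {S : Type*} [Semigroup S] (a b c : S)
    (ha : InfOrder a) (hb : InfOrder b) (hc : InfOrder c)
    (hab : genSet a ∩ genSet b = ∅) (hac : genSet a ∩ genSet c = ∅)
    (hbc : genSet b ∩ genSet c = ∅)
    (hcover : genSet a ∪ genSet b ∪ genSet c = Set.univ)
    (i j k l : ℕ) (hi : 1 ≤ i) (hj : 1 ≤ j) (hk : 1 ≤ k) (hl : 1 ≤ l)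
    (h1 : a * b = pw a i) (h2 : b * a = pw a i)
    (h3 : a * c = pw a j) (h4 : c * a = pw a j)
    (h5 : b * c = pw a k) (h6 : c * b = pw a l) :
    k = l ∧ i + j = k + 2 := by
  have hkl : (b * c) * b = b * (c * b) := mul_assoc b c b
  rw [h5, h6, pw_congr a (show k = (k - 1) + 1 by omega),
    pw_mul_b a b i hi h1, pw_congr a (show l = (l - 1) + 1 by omega),
    b_mul_pw a b i hi h2] at hkl
  have e1 : k - 1 + i = i + (l - 1) := ha _ _ (by omega) (by omega) hkl
  have h7 : (a * b) * (c * a) = a * ((b * c) * a) := by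
    rw [mul_assoc, mul_assoc]
  rw [h1, h4, h5, ← pw_add' a i j hi hj,
    pw_congr a (show k = (k - 1) + 1 by omega), ← pw_succ,
    show k - 1 + 2 = (k + 1 - 1) + 1 by omega, ← pw_succ',
    show k + 1 - 1 + 1 + 1 = k + 2 by omega] at h7
  have e2 : i + j = k + 2 := ha _ _ (by omega) (by omega) h7
  exact ⟨by omega, e2⟩
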